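/- arXiv:1710.03026 — 2 statements merged into one kernel-verified Lean document; each statement's English description precedes it below -/
import Mathlib

section
/- Let ℓ ≥ 1 and (s_n) be a binary sequence whose generating function over F_2 satisfies f_1(x², G(x)²) + (x^{2^ℓ}+1)G(x) + f_0(x) = 0 with deg f_0 ≤ 2^ℓ − 2. Then W(s_n, N) ≥ ⌊N/2^ℓ⌋. -/
/-- The `N`th well-distribution measure of a binary sequence. -/
noncomputable def Wmeasure (s : ℕ → ZMod 2) (N : ℕ) : ℤ :=
  sSup {x : ℤ | ∃ a b t : ℕ, 1 ≤ b ∧ 1 ≤ t ∧ a + (t - 1) * b < N ∧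
    x = |∑ j ∈ Finset.range t, (-1 : ℤ) ^ (s (a + j * b)).val|}

instance PSzmod2.charP : CharP (PowerSeries (ZMod 2)) 2 :=
  charP_of_injective_ringHom (PowerSeries.C_injective (R := ZMod 2)) 2

lemma sq_coeff_odd (H : PowerSeries (ZMod 2)) (n : ℕ) (hn : Odd n) :
    PowerSeries.coeff (R := ZMod 2) n (H ^ 2) = 0 := by
  rw [sq, PowerSeries.coeff_mul]
  apply Finset.sum_involution (fun p _ => p.swap)
  · intro p hp
    show _ * _ + _ * _ = 0
    simp only [Prod.fst_swap, Prod.snd_swap]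
    rw [mul_comm, ← two_mul]
    exact mul_eq_zero_of_left (by decide) _
  · intro p hp _
    rw [Finset.HasAntidiagonal.mem_antidiagonal] at hp
    intro hsw
    have h1 : p.2 = p.1 := congrArg Prod.fst hsw
    rcases hn with ⟨m, hm⟩
    omega
  · intro p hp
    exact Prod.swap_swap p
  · intro p hp
    rw [Finset.HasAntidiagonal.mem_antidiagonal] at hp ⊢
    simpa [add_comm] using hp

lemma aeval_sq (X G : PowerSeries (ZMod 2)) (f : MvPolynomial (Fin 2) (ZMod 2)) :
    MvPolynomial.aeval ![X ^ 2, G ^ 2] f = (MvPolynomial.aeval ![X, G] f) ^ 2 := by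
  have h : ((MvPolynomial.aeval ![X ^ 2, G ^ 2]).toRingHom :
        MvPolynomial (Fin 2) (ZMod 2) →+* PowerSeries (ZMod 2))
      = (frobenius (PowerSeries (ZMod 2)) 2).comp
          (MvPolynomial.aeval ![X, G]).toRingHom := by
    apply MvPolynomial.ringHom_ext
    · intro c
      have hc : c ^ 2 = c := by revert c; decide
      simp [frobenius_def, ← map_pow, hc]
    · intro i
      fin_cases i <;> simp [frobenius_def]
  have := RingHom.congr_fun h f
  simp only [RingHom.comp_apply, AlgHom.toRingHom_eq_coe, RingHom.coe_coe, frobenius_def] at this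
  exact this

/-- If `G = ∑ s_n x^n ∈ F₂[[x]]` satisfies `f₁(x², G²) + (x^{2^ℓ}+1)G + f₀(x) = 0`
with `deg f₀ ≤ 2^ℓ - 2` and `ℓ ≥ 1`, then `W(s, N) ≥ ⌊N/2^ℓ⌋`. -/
theorem well_distribution_of_functional_equation' (ℓ : ℕ) (hℓ : 1 ≤ ℓ) (s : ℕ → ZMod 2)
    (f₁ : MvPolynomial (Fin 2) (ZMod 2)) (f₀ : Polynomial (ZMod 2))
    (hdeg : f₀.natDegree ≤ 2 ^ ℓ - 2)
    (heq : MvPolynomial.aeval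
        ![(PowerSeries.X : PowerSeries (ZMod 2)) ^ 2, (PowerSeries.mk s) ^ 2] f₁
      + ((PowerSeries.X : PowerSeries (ZMod 2)) ^ (2 ^ ℓ) + 1) * PowerSeries.mk s
      + Polynomial.aeval (PowerSeries.X : PowerSeries (ZMod 2)) f₀ = 0) :
    ∀ N : ℕ, ((N / 2 ^ ℓ : ℕ) : ℤ) ≤ Wmeasure s N := by
  have h2 : 2 ≤ 2 ^ ℓ := by
    calc 2 = 2 ^ 1 := (pow_one 2).symm
    _ ≤ 2 ^ ℓ := Nat.pow_le_pow_right (by norm_num) hℓ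
  have hev : 2 ^ ℓ = 2 * 2 ^ (ℓ - 1) := by
    rw [← pow_succ']
    congr 1
    omega
  -- the coefficient relation at odd indices
  have key : ∀ n : ℕ, Odd n → 2 ^ ℓ - 1 ≤ n →
      s n = if 2 ^ ℓ ≤ n then s (n - 2 ^ ℓ) else 0 := by
    intro n hodd hn
    have h1 := congrArg (PowerSeries.coeff (R := ZMod 2) n) heq
    rw [map_add, map_add, map_zero] at h1
    rw [aeval_sq, sq_coeff_odd _ _ hodd, zero_add] at h1
    -- f₀ part
    have hf₀ : Polynomial.aeval (PowerSeries.X : PowerSeries (ZMod 2)) f₀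
        = (f₀ : PowerSeries (ZMod 2)) := by
      have hmap : (algebraMap (ZMod 2) (PowerSeries (ZMod 2))) = PowerSeries.C (R := ZMod 2) :=
        RingHom.ext fun c => by simp [PowerSeries.algebraMap_apply]
      rw [Polynomial.aeval_def, ← Polynomial.eval₂_C_X_eq_coe, hmap]
    rw [hf₀, Polynomial.coeff_coe] at h1
    have hdn : f₀.coeff n = 0 := by
      apply Polynomial.coeff_eq_zero_of_natDegree_lt
      omega
    rw [hdn, add_zero, add_mul, one_mul, map_add, PowerSeries.coeff_X_pow_mul',
      PowerSeries.coeff_mk] at h1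
    by_cases hc : 2 ^ ℓ ≤ n
    · rw [if_pos hc] at h1 ⊢
      rw [PowerSeries.coeff_mk] at h1
      have h3 : s n = -(s (n - 2 ^ ℓ)) := eq_neg_of_add_eq_zero_right h1
      rwa [CharTwo.neg_eq] at h3
    · rw [if_neg hc] at h1 ⊢
      rwa [zero_add, PowerSeries.coeff_mk] at h1
  -- s vanishes along the progression 2^ℓ - 1 + k * 2^ℓ
  have szero : ∀ k : ℕ, s (2 ^ ℓ - 1 + k * 2 ^ ℓ) = 0 := by
    intro k
    induction k with
    | zero =>
      have h := key (2 ^ ℓ - 1) ⟨2 ^ (ℓ - 1) - 1, by omega⟩ le_rfl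
      rw [if_neg (by omega)] at h
      simpa using h
    | succ k ih =>
      have hodd : Odd (2 ^ ℓ - 1 + (k + 1) * 2 ^ ℓ) := by
        refine ⟨2 ^ (ℓ - 1) - 1 + (k + 1) * 2 ^ (ℓ - 1), ?_⟩
        have hk : (k + 1) * 2 ^ ℓ = 2 * ((k + 1) * 2 ^ (ℓ - 1)) := by
          rw [hev]; ring
        omega
      have := key (2 ^ ℓ - 1 + (k + 1) * 2 ^ ℓ) hodd (by nlinarith)
      rw [if_pos (by nlinarith)] at this
      have harith : 2 ^ ℓ - 1 + (k + 1) * 2 ^ ℓ - 2 ^ ℓ = 2 ^ ℓ - 1 + k * 2 ^ ℓ := by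
        have : (k + 1) * 2 ^ ℓ = k * 2 ^ ℓ + 2 ^ ℓ := by ring
        omega
      rw [harith, ih] at this
      exact this
  intro N
  set S : Set ℤ := {x : ℤ | ∃ a b t : ℕ, 1 ≤ b ∧ 1 ≤ t ∧ a + (t - 1) * b < N ∧
    x = |∑ j ∈ Finset.range t, (-1 : ℤ) ^ (s (a + j * b)).val|} with hS
  have hbdd : BddAbove S := by
    refine ⟨(N : ℤ), ?_⟩
    rintro x ⟨a, b, t, hb, ht, hlt, rfl⟩
    have h1 : |∑ j ∈ Finset.range t, (-1 : ℤ) ^ (s (a + j * b)).val| ≤ (t : ℤ) := by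
      calc |∑ j ∈ Finset.range t, (-1 : ℤ) ^ (s (a + j * b)).val|
          ≤ ∑ j ∈ Finset.range t, |(-1 : ℤ) ^ (s (a + j * b)).val| :=
            Finset.abs_sum_le_sum_abs _ _
        _ ≤ ∑ j ∈ Finset.range t, 1 := by
            apply Finset.sum_le_sum
            intro j _
            rw [abs_pow, abs_neg, abs_one, one_pow]
        _ = (t : ℤ) := by simp
    have h2 : t ≤ N := by
      have : (t - 1) * b ≥ t - 1 := Nat.le_mul_of_pos_right _ (by omega)
      omega
    calc |∑ j ∈ Finset.range t, (-1 : ℤ) ^ (s (a + j * b)).val| ≤ (t : ℤ) := h1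
      _ ≤ (N : ℤ) := by exact_mod_cast h2
  unfold Wmeasure
  rw [← hS]
  by_cases ht0 : N / 2 ^ ℓ = 0
  · rw [ht0]
    by_cases hN : N = 0
    · have : S = ∅ := by
        ext x
        simp only [hS, Set.mem_setOf_eq, Set.mem_empty_iff_false, iff_false]
        rintro ⟨a, b, t, hb, ht, hlt, rfl⟩
        omega
      rw [this, Int.csSup_empty]
      simp
    · have hmem : (1 : ℤ) ∈ S := by
        refine ⟨0, 1, 1, le_rfl, le_rfl, by omega, ?_⟩
        simp [abs_pow]
      have := le_csSup hbdd hmem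
      omega
  · set t := N / 2 ^ ℓ with htdef
    have htN : t * 2 ^ ℓ ≤ N := Nat.div_mul_le_self N (2 ^ ℓ)
    have ht1 : 1 ≤ t := Nat.pos_of_ne_zero ht0
    have hsm : (t - 1) * 2 ^ ℓ = t * 2 ^ ℓ - 1 * 2 ^ ℓ := Nat.sub_mul t 1 (2 ^ ℓ)
    have hge : 1 * 2 ^ ℓ ≤ t * 2 ^ ℓ := Nat.mul_le_mul_right _ ht1
    have hmem : ((t : ℤ)) ∈ S := by
      refine ⟨2 ^ ℓ - 1, 2 ^ ℓ, t, by omega, ht1, by omega, ?_⟩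
      · have hsum : ∀ j ∈ Finset.range t,
            (-1 : ℤ) ^ (s (2 ^ ℓ - 1 + j * 2 ^ ℓ)).val = 1 := by
          intro j _
          rw [szero j]
          rfl
        rw [Finset.sum_congr rfl hsum, Finset.sum_const, Finset.card_range, nsmul_eq_mul,
          mul_one, abs_of_nonneg (by positivity)]
    exact le_csSup hbdd hmem
end

section
/- Let (s_n) be a binary sequence whose generating function G(x) over F_2 satisfies (x+1)^{2^ℓ}((a_1 x + a_0)G(x)² + G(x)) + f(x) = 0 with ℓ ≥ 0, deg f ≤ 2^ℓ − 1, (a_1,a_0) ≠ (0,0). Then the Nth correlation measure of order 2 satisfies C_2(s_n, N) > N/(2^ℓ + 2) − 2 for all N ≥ 2^{ℓ+1} + 4. -/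
open PowerSeries Finset

/-! ### Auxiliary lemmas -/

lemma zmod2_add_eq_zero : ∀ {a b : ZMod 2}, a + b = 0 → a = b := by decide

lemma zmod2_mul_self : ∀ a : ZMod 2, a * a = a := by decide

lemma zmod2_add_self : ∀ a : ZMod 2, a + a = 0 := by decide

lemma zmod2_rearr1 : ∀ a b c d : ZMod 2, a + b = c + d → b + d = a + c := by decide

lemma zmod2_rearr2 : ∀ A B C U UD U2 W WD : ZMod 2,
    B + C = UD + U → A + B = U2 + UD → WD + U2 = W + U → A + C = WD + W := by decide

lemma zmod2_cancel : ∀ a b c : ZMod 2, a + b = c → a = c → b = 0 := by decide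

lemma coeff_mk_sq (s : ℕ → ZMod 2) (n : ℕ) :
    PowerSeries.coeff n ((PowerSeries.mk s) ^ 2) =
      if n % 2 = 0 then s (n / 2) else 0 := by
  rw [sq, PowerSeries.coeff_mul]
  simp only [PowerSeries.coeff_mk]
  rw [← Finset.sum_filter_add_sum_filter_not (Finset.HasAntidiagonal.antidiagonal n) (fun p => p.1 = p.2)]
  have h2 : ∑ p ∈ (Finset.HasAntidiagonal.antidiagonal n).filter (fun p => ¬ p.1 = p.2), s p.1 * s p.2 = 0 := by
    apply Finset.sum_involution (fun a _ => Prod.swap a)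
    · intro a ha
      simp only [Prod.fst_swap, Prod.snd_swap]
      rw [mul_comm]
      exact zmod2_add_self _
    · intro a ha hne hsw
      simp only [Finset.mem_filter] at ha
      exact ha.2 (by simpa [Prod.ext_iff, eq_comm] using hsw)
    · intro a ha
      simp only [Finset.mem_filter, Finset.HasAntidiagonal.mem_antidiagonal] at ha ⊢
      exact ⟨by simp [add_comm, ha.1], fun h => ha.2 (by simpa [eq_comm] using h)⟩
    · intro a ha; simp
  rw [h2, add_zero]
  by_cases hn : n % 2 = 0
  · have : (Finset.HasAntidiagonal.antidiagonal n).filter (fun p => p.1 = p.2) = {(n/2, n/2)} := by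
      ext ⟨i, j⟩
      simp only [Finset.mem_filter, Finset.HasAntidiagonal.mem_antidiagonal, Finset.mem_singleton, Prod.mk.injEq]
      constructor
      · rintro ⟨h1, h2⟩; constructor <;> omega
      · rintro ⟨rfl, rfl⟩; constructor <;> omega
    rw [this, if_pos hn, Finset.sum_singleton, zmod2_mul_self]
  · have : (Finset.HasAntidiagonal.antidiagonal n).filter (fun p => p.1 = p.2) = ∅ := by
      ext ⟨i, j⟩
      simp only [Finset.mem_filter, Finset.HasAntidiagonal.mem_antidiagonal, Finset.notMem_empty, iff_false,
        not_and]
      intro h1 h2; omega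
    rw [this, if_neg hn, Finset.sum_empty]

lemma psCharP : CharP (PowerSeries (ZMod 2)) 2 :=
  charP_of_injective_ringHom (PowerSeries.C_injective (R := ZMod 2)) 2

lemma Xadd_pow (ℓ : ℕ) :
    ((PowerSeries.X : PowerSeries (ZMod 2)) + 1) ^ (2 ^ ℓ) = X ^ (2 ^ ℓ) + 1 := by
  haveI := psCharP
  rw [add_pow_char_pow, one_pow]

lemma coeff_aeval_eq_zero (f : Polynomial (ZMod 2)) (m : ℕ) (hm : f.natDegree < m) :
    PowerSeries.coeff m
      (Polynomial.aeval (PowerSeries.X : PowerSeries (ZMod 2)) f) = 0 := by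
  rw [Polynomial.aeval_eq_sum_range, map_sum]
  apply Finset.sum_eq_zero
  intro i hi
  rw [PowerSeries.coeff_smul, PowerSeries.coeff_X_pow, if_neg, smul_zero]
  simp only [Finset.mem_range] at hi
  omega

noncomputable def qe (s : ℕ → ZMod 2) (n : ℕ) : ZMod 2 := if n % 2 = 0 then s (n/2) else 0
noncomputable def xqe (s : ℕ → ZMod 2) (n : ℕ) : ZMod 2 := if n = 0 then 0 else qe s (n-1)

lemma coeff_X_mul_sq (s : ℕ → ZMod 2) (n : ℕ) :
    PowerSeries.coeff n (PowerSeries.X * (PowerSeries.mk s) ^ 2) = xqe s n := by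
  cases n with
  | zero =>
    rw [PowerSeries.coeff_zero_eq_constantCoeff_apply, map_mul, PowerSeries.constantCoeff_X,
      zero_mul]
    rfl
  | succ m =>
    rw [PowerSeries.coeff_succ_X_mul, coeff_mk_sq]
    simp [xqe, qe]

lemma coeff_H (s : ℕ → ZMod 2) (a₀ a₁ : ZMod 2) (n : ℕ) :
    PowerSeries.coeff n
      ((PowerSeries.C a₁ * PowerSeries.X + PowerSeries.C a₀) *
          (PowerSeries.mk s) ^ 2 + PowerSeries.mk s) =
      a₁ * xqe s n + a₀ * qe s n + s n := by
  rw [map_add, add_mul, map_add, mul_assoc, PowerSeries.coeff_C_mul,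
    PowerSeries.coeff_C_mul, PowerSeries.coeff_mk, coeff_mk_sq, coeff_X_mul_sq]
  rfl

lemma hper (ℓ : ℕ) (s : ℕ → ZMod 2) (a₀ a₁ : ZMod 2) (f : Polynomial (ZMod 2))
    (hdeg : f.natDegree ≤ 2 ^ ℓ - 1)
    (heq : ((PowerSeries.X : PowerSeries (ZMod 2)) + 1) ^ (2 ^ ℓ) *
        ((PowerSeries.C a₁ * PowerSeries.X + PowerSeries.C a₀) *
          (PowerSeries.mk s) ^ 2 + PowerSeries.mk s)
      + Polynomial.aeval (PowerSeries.X : PowerSeries (ZMod 2)) f = 0) :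
    ∀ n, a₁ * xqe s (n + 2^ℓ) + a₀ * qe s (n + 2^ℓ) + s (n + 2^ℓ) =
      a₁ * xqe s n + a₀ * qe s n + s n := by
  intro n
  have h0 := congrArg (PowerSeries.coeff (n + 2^ℓ)) heq
  rw [map_add, map_zero, Xadd_pow, add_mul, one_mul, map_add,
    PowerSeries.coeff_X_pow_mul,
    coeff_aeval_eq_zero f _ (by have := Nat.one_le_two_pow (n := ℓ); omega),
    add_zero, coeff_H, coeff_H] at h0
  exact (zmod2_add_eq_zero h0).symm

lemma xqe_even (s : ℕ → ZMod 2) (m : ℕ) : xqe s (2*m) = 0 := by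
  rcases Nat.eq_zero_or_pos m with h | h
  · simp [xqe, h]
  · simp only [xqe, if_neg (by omega : ¬ 2*m = 0), qe]
    rw [if_neg (by omega : ¬ (2*m-1) % 2 = 0)]

lemma xqe_odd (s : ℕ → ZMod 2) (m : ℕ) : xqe s (2*m+1) = s m := by
  simp only [xqe, if_neg (by omega : ¬ 2*m+1 = 0), qe]
  rw [if_pos (by omega : (2*m+1-1) % 2 = 0), show (2*m+1-1)/2 = m from by omega]

lemma xqe_add_qe (s : ℕ → ZMod 2) (k : ℕ) : xqe s k + qe s k = s (k/2) := by
  by_cases hk : k % 2 = 0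
  · have h1 : xqe s k = 0 := by
      rcases Nat.eq_zero_or_pos k with h | h
      · simp [xqe, h]
      · simp only [xqe, if_neg (by omega : ¬ k = 0), qe]
        rw [if_neg (by omega : ¬ (k-1) % 2 = 0)]
    have h2 : qe s k = s (k/2) := by simp only [qe]; rw [if_pos hk]
    rw [h1, h2, zero_add]
  · have h1 : xqe s k = s (k/2) := by
      simp only [xqe, if_neg (by omega : ¬ k = 0), qe]
      rw [if_pos (by omega : (k-1) % 2 = 0), show (k-1)/2 = k/2 from by omega]
    have h2 : qe s k = 0 := by simp only [qe]; rw [if_neg hk]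
    rw [h1, h2, add_zero]

/-! ### Counting and summation lemmas -/

lemma count_mod4 (r M : ℕ) (hr : r < 4) :
    ((Finset.range M).filter (fun n => n % 4 = r)).card = (M + 3 - r) / 4 := by
  induction M with
  | zero => simp; omega
  | succ M ih =>
    rw [Finset.range_add_one, Finset.filter_insert]
    by_cases h : M % 4 = r
    · rw [if_pos h, Finset.card_insert_of_notMem (by simp)]
      omega
    · rw [if_neg h]
      omega

lemma neg_one_pow_vals (a b : ZMod 2) :
    (-1 : ℤ) ^ (a.val + b.val) = (-1 : ℤ) ^ ((a + b).val) := by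
  revert a b; decide

lemma neg_one_pow_options (k : ℕ) : (-1 : ℤ) ^ k = 1 ∨ (-1 : ℤ) ^ k = -1 := by
  rcases Nat.even_or_odd k with h | h
  · exact Or.inl (Even.neg_one_pow h)
  · exact Or.inr (Odd.neg_one_pow h)

lemma sum_lower (s : ℕ → ZMod 2) (L M : ℕ) (bad : ℕ → Prop) [DecidablePred bad]
    (h : ∀ n, ¬ bad n → s (n + L) = s n) :
    (M : ℤ) - 2 * ((Finset.range M).filter (fun n => bad n)).card ≤
      ∑ n ∈ Finset.range M, (-1 : ℤ) ^ ((s n).val + (s (n + L)).val) := by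
  have key : ∀ n ∈ Finset.range M,
      (if bad n then (-1 : ℤ) else 1) ≤ (-1 : ℤ) ^ ((s n).val + (s (n + L)).val) := by
    intro n _
    by_cases hb : bad n
    · rw [if_pos hb]
      rcases neg_one_pow_options ((s n).val + (s (n + L)).val) with h1 | h1 <;> rw [h1] <;>
        norm_num
    · rw [if_neg hb, h n hb]
      have : (s n).val + (s n).val = 2 * (s n).val := by ring
      rw [this, pow_mul]
      norm_num
  calc (M : ℤ) - 2 * ((Finset.range M).filter (fun n => bad n)).card
      = ∑ n ∈ Finset.range M, (if bad n then (-1 : ℤ) else 1) := by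
        rw [Finset.sum_ite, Finset.sum_const, Finset.sum_const]
        have := Finset.card_filter_add_card_filter_not (s := Finset.range M)
          (p := fun n => bad n)
        rw [Finset.card_range] at this
        have h2 : ((Finset.range M).filter (fun n => ¬ bad n)).card
            = M - ((Finset.range M).filter (fun n => bad n)).card := by omega
        rw [h2, nsmul_eq_mul, nsmul_eq_mul]
        push_cast [Nat.cast_sub (by omega : ((Finset.range M).filter (fun n => bad n)).card ≤ M)]
        ring
    _ ≤ _ := Finset.sum_le_sum key

/-- The `N`th correlation measure of order 2 of a binary sequence:
`C₂(s,N) = max |∑_{n<M} (-1)^{s_{n+d₁}+s_{n+d₂}}|` over `M` and lags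
`0 ≤ d₁ < d₂` with `d₂ + M < N`. -/
noncomputable def C2 (s : ℕ → ZMod 2) (N : ℕ) : ℤ :=
  sSup {x : ℤ | ∃ M d₁ d₂ : ℕ, d₁ < d₂ ∧ d₂ + M < N ∧
    x = |∑ n ∈ Finset.range M, (-1 : ℤ) ^ ((s (n + d₁)).val + (s (n + d₂)).val)|}

lemma le_C2 (s : ℕ → ZMod 2) (N M d₁ d₂ : ℕ) (h₁ : d₁ < d₂) (h₂ : d₂ + M < N) :
    |∑ n ∈ Finset.range M, (-1 : ℤ) ^ ((s (n + d₁)).val + (s (n + d₂)).val)| ≤ C2 s N := by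
  apply le_csSup
  · refine ⟨N, ?_⟩
    rintro x ⟨M', d₁', d₂', h, hlt, rfl⟩
    calc |∑ n ∈ Finset.range M', (-1 : ℤ) ^ ((s (n + d₁')).val + (s (n + d₂')).val)|
        ≤ ∑ n ∈ Finset.range M', |(-1 : ℤ) ^ ((s (n + d₁')).val + (s (n + d₂')).val)| :=
          Finset.abs_sum_le_sum_abs _ _
      _ = ∑ n ∈ Finset.range M', 1 := by
          apply Finset.sum_congr rfl; intro n _; rw [abs_pow, abs_neg, abs_one, one_pow]
      _ = (M' : ℤ) := by simp
      _ ≤ (N : ℤ) := by exact_mod_cast Nat.le_of_lt (by omega)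
  · exact ⟨M, d₁, d₂, h₁, h₂, rfl⟩

lemma corr_lower (s : ℕ → ZMod 2) (N lag r M : ℕ) (hlag : 1 ≤ lag) (hM : lag + M < N)
    (hlem : ∀ n, n % 4 ≠ r → s (n + lag) = s n) :
    (M : ℤ) - 2 * ((Finset.range M).filter (fun n => n % 4 = r)).card ≤ C2 s N := by
  refine le_trans ?_ (le_C2 s N M 0 lag (by omega) (by omega))
  refine le_trans (sum_lower s lag M (fun n => n % 4 = r) hlem) ?_
  exact le_abs_self _

lemma abs_const_sum (s : ℕ → ZMod 2) (d₁ d₂ M : ℕ) (c : ZMod 2)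
    (h : ∀ n < M, s (n + d₁) + s (n + d₂) = c) :
    |∑ n ∈ Finset.range M, (-1 : ℤ) ^ ((s (n + d₁)).val + (s (n + d₂)).val)| = M := by
  have heq : ∀ n ∈ Finset.range M,
      (-1 : ℤ) ^ ((s (n + d₁)).val + (s (n + d₂)).val) = (-1 : ℤ) ^ c.val := by
    intro n hn
    rw [neg_one_pow_vals, h n (Finset.mem_range.mp hn)]
  rw [Finset.sum_congr rfl heq, Finset.sum_const, Finset.card_range, nsmul_eq_mul, abs_mul,
    abs_pow, abs_neg, abs_one, one_pow, mul_one, Nat.abs_cast]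

lemma final_rat (s : ℕ → ZMod 2) (N t : ℕ) (B : ℤ) (hB : B ≤ C2 s N)
    (hnum : (N : ℤ) < (B + 2) * ((t : ℤ) + 2)) :
    (N : ℚ) / ((t : ℚ) + 2) - 2 < (C2 s N : ℚ) := by
  have hpos : (0 : ℚ) < (t : ℚ) + 2 := by positivity
  have h1 : (N : ℚ) / ((t : ℚ) + 2) < (B : ℚ) + 2 := by
    rw [div_lt_iff₀ hpos]
    exact_mod_cast hnum
  have h2 : (B : ℚ) ≤ (C2 s N : ℚ) := by exact_mod_cast hB
  linarith

lemma numAB (N T cnt M : ℕ) (hT : 2 ≤ T) (hM : M + 1 + 2*T = N) (hM3 : 3 ≤ M)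
    (hcnt : 4*cnt ≤ M + 3) :
    (N : ℤ) < ((M : ℤ) - 2*cnt + 2) * ((T : ℤ) + 2) := by
  have hc1 : 2*cnt + 1 ≤ M := by omega
  have h1 : 1 ≤ (M : ℤ) - 2*(cnt : ℤ) := by
    have : (2*cnt + 1 : ℤ) ≤ (M : ℤ) := by exact_mod_cast hc1
    omega
  have h2 : (M : ℤ) - 3 ≤ 2*((M : ℤ) - 2*(cnt : ℤ)) := by
    have : (4*cnt : ℤ) ≤ (M : ℤ) + 3 := by exact_mod_cast hcnt
    omega
  have h3 : 2*((M : ℤ) - 2*(cnt : ℤ)) ≤ ((M : ℤ) - 2*(cnt : ℤ)) * (T : ℤ) := by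
    nlinarith
  have hN : (N : ℤ) = (M : ℤ) + 1 + 2*(T : ℤ) := by exact_mod_cast hM.symm
  nlinarith

/-! ### Case lemmas -/

lemma two_pow_split (l : ℕ) (h : 0 < l) : 2^l = 2 * 2^(l-1) := by
  conv_lhs => rw [show l = (l-1)+1 from by omega]
  rw [pow_succ']

lemma caseA_lem (s : ℕ → ZMod 2) (D : ℕ)
    (hOdd : ∀ n, n % 2 = 1 → s (n + 2*D) = s n)
    (hEven : ∀ m, s (m + D) + s (2*m + 2*D) = s m + s (2*m)) :
    ∀ n, n % 4 ≠ 0 → s (n + 4*D) = s n := by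
  intro n hn
  by_cases h2 : n % 2 = 1
  · have h1 := hOdd n h2
    have hb := hOdd (n + 2*D) (by omega)
    rw [show n + 2*D + 2*D = n + 4*D from by ring] at hb
    rw [hb, h1]
  · obtain ⟨m, rfl⟩ : ∃ m, n = 2*m := ⟨n/2, by omega⟩
    have hm : m % 2 = 1 := by omega
    have e2 := hEven m
    have e1 := hEven (m + D)
    rw [show m + D + D = m + 2*D from by ring, show 2*(m+D) + 2*D = 2*m + 4*D from by ring,
      show 2*(m+D) = 2*m + 2*D from by ring] at e1
    have e3 := hOdd m hm
    rw [e3] at e1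
    have := e1.trans e2
    rw [show 2*m + 4*D = 2*m + 4*D from rfl]
    exact add_left_cancel this

lemma caseB_lem (s : ℕ → ZMod 2) (D : ℕ)
    (hEvenB : ∀ m, s (2*m + 2*D) = s (2*m))
    (hOddB : ∀ m, s (m + D) + s (2*m + 1 + 2*D) = s m + s (2*m + 1)) :
    ∀ n, n % 4 ≠ 3 → s (n + 4*D) = s n := by
  intro n hn
  by_cases h2 : n % 2 = 0
  · obtain ⟨m, rfl⟩ : ∃ m, n = 2*m := ⟨n/2, by omega⟩
    have hb := hEvenB (m + D)
    rw [show 2*(m+D) + 2*D = 2*m + 4*D from by ring,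
      show 2*(m+D) = 2*m + 2*D from by ring] at hb
    rw [hb]
    exact hEvenB m
  · obtain ⟨m, rfl⟩ : ∃ m, n = 2*m + 1 := ⟨n/2, by omega⟩
    have hm : m % 2 = 0 := by omega
    have e2 := hOddB m
    have e1 := hOddB (m + D)
    rw [show m + D + D = m + 2*D from by ring,
      show 2*(m+D) + 1 + 2*D = 2*m + 1 + 4*D from by ring,
      show 2*(m+D) + 1 = 2*m + 1 + 2*D from by ring] at e1
    have e3 : s (m + 2*D) = s m := by
      obtain ⟨m', rfl⟩ : ∃ m', m = 2*m' := ⟨m/2, by omega⟩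
      have := hEvenB m'
      rw [show 2*m' + 2*D = 2*m' + 2*D from rfl] at this
      exact this
    rw [e3] at e1
    have := e1.trans e2
    exact add_left_cancel this

lemma caseC_lem (s : ℕ → ZMod 2) (D : ℕ)
    (hC : ∀ n, s (n/2 + D) + s (n + 2*D) = s (n/2) + s n) :
    ∀ k n, s (n + 2^(k+1)*D) + s n = s (n / 2^(k+1) + D) + s (n / 2^(k+1)) := by
  intro k
  induction k with
  | zero =>
    intro n
    rw [show (2:ℕ)^(0+1) = 2 from rfl]
    exact zmod2_rearr1 _ _ _ _ (hC n)
  | succ k ih =>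
    intro n
    have e1 := ih n
    have e2 := ih (n + 2^(k+1)*D)
    rw [show n + 2^(k+1)*D + 2^(k+1)*D = n + 2^(k+2)*D from by ring,
      Nat.add_mul_div_left _ _ (by positivity : 0 < 2^(k+1))] at e2
    have e3 := hC (n / 2^(k+1))
    rw [Nat.div_div_eq_div_mul, show 2^(k+1)*2 = 2^(k+2) from by ring] at e3
    rw [show n / 2^(k+1) + D + D = n / 2^(k+1) + 2*D from by ring] at e2
    exact zmod2_rearr2 _ _ _ _ _ _ _ _ e1 e2 e3

/-! ### Main theorem -/

/-- If `G = ∑ s_n x^n ∈ F₂[[x]]` satisfies `(x+1)^{2^ℓ}((a₁x+a₀)G² + G) + f(x) = 0`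
with `deg f ≤ 2^ℓ - 1` and `(a₁,a₀) ≠ (0,0)`, then
`C₂(s,N) > N/(2^ℓ+2) - 2` for `N ≥ 2^{ℓ+1} + 4`. -/
theorem correlation_of_functional_equation (ℓ : ℕ) (s : ℕ → ZMod 2)
    (a₀ a₁ : ZMod 2) (ha : ¬(a₁ = 0 ∧ a₀ = 0)) (f : Polynomial (ZMod 2))
    (hdeg : f.natDegree ≤ 2 ^ ℓ - 1)
    (heq : ((PowerSeries.X : PowerSeries (ZMod 2)) + 1) ^ (2 ^ ℓ) *
        ((PowerSeries.C a₁ * PowerSeries.X + PowerSeries.C a₀) *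
          (PowerSeries.mk s) ^ 2 + PowerSeries.mk s)
      + Polynomial.aeval (PowerSeries.X : PowerSeries (ZMod 2)) f = 0) :
    ∀ N : ℕ, 2 ^ (ℓ + 1) + 4 ≤ N →
      (N : ℚ) / (2 ^ ℓ + 2) - 2 < (C2 s N : ℚ) := by
  intro N hN
  have Hper := hper ℓ s a₀ a₁ f hdeg heq
  have hNT : 2 * 2^ℓ + 4 ≤ N := by
    have : (2:ℕ)^(ℓ+1) = 2 * 2^ℓ := by ring
    omega
  have hcast : ((2:ℚ)^ℓ) = ((2^ℓ : ℕ) : ℚ) := by push_cast; ring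
  rw [hcast]
  have hcases : (a₁ = 0 ∧ a₀ = 1) ∨ (a₁ = 1 ∧ a₀ = 0) ∨ (a₁ = 1 ∧ a₀ = 1) :=
    (by decide : ∀ x y : ZMod 2, ¬(x = 0 ∧ y = 0) →
      (x = 0 ∧ y = 1) ∨ (x = 1 ∧ y = 0) ∨ (x = 1 ∧ y = 1)) a₁ a₀ ha
  rcases hcases with ⟨h1, h0⟩ | ⟨h1, h0⟩ | ⟨h1, h0⟩ <;> subst h1 <;> subst h0
  · -- Case A : a₁ = 0, a₀ = 1
    simp only [zero_mul, one_mul, zero_add] at Hper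
    rcases Nat.eq_zero_or_pos ℓ with hl | hl
    · -- ℓ = 0
      subst hl
      simp only [pow_zero] at Hper hNT ⊢
      have Hconst : ∀ n, qe s n + s n = qe s 0 + s 0 := by
        intro n
        induction n with
        | zero => rfl
        | succ n ih => exact (Hper n).trans ih
      have Hzero : ∀ n, qe s n + s n = 0 := by
        intro n
        rw [Hconst n, show qe s 0 = s 0 from by simp [qe]]
        exact zmod2_add_self _
      have hzero : ∀ n, 1 ≤ n → s n = 0 := by
        intro n
        induction n using Nat.strong_induction_on with
        | _ n ih =>
          intro hn
          by_cases hpar : n % 2 = 0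
          · have h := Hzero n
            simp only [qe] at h
            rw [if_pos hpar] at h
            have h2 : s (n/2) = s n := zmod2_add_eq_zero h
            rw [← h2]
            exact ih (n/2) (by omega) (by omega)
          · have h := Hzero n
            simp only [qe] at h
            rw [if_neg hpar] at h
            simpa using h
      have hconst2 : ∀ n, n < N - 3 → s (n + 1) + s (n + 2) = 0 := by
        intro n _
        rw [hzero (n+1) (by omega), hzero (n+2) (by omega), add_zero]
      have habs := abs_const_sum s 1 2 (N-3) 0 hconst2
      have hC2 : ((N - 3 : ℕ) : ℤ) ≤ C2 s N := by
        rw [← habs]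
        exact le_C2 s N (N-3) 1 2 (by omega) (by omega)
      apply final_rat s N 1 _ hC2
      push_cast [Nat.cast_sub (by omega : 3 ≤ N)]
      linarith [(by exact_mod_cast hNT : (6:ℤ) ≤ (N:ℤ))]
    · -- ℓ ≥ 1
      obtain ⟨D, hTD, hD1⟩ : ∃ D, 2^ℓ = 2*D ∧ 1 ≤ D :=
        ⟨2^(ℓ-1), two_pow_split ℓ hl, Nat.one_le_two_pow⟩
      have HA : ∀ n, qe s (n + 2*D) + s (n + 2*D) = qe s n + s n := by
        intro n; have := Hper n; rw [hTD] at this; exact this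
      have hOdd : ∀ n, n % 2 = 1 → s (n + 2*D) = s n := by
        intro n hn
        have := HA n
        simp only [qe] at this
        rw [if_neg (by omega : ¬ (n + 2*D) % 2 = 0), if_neg (by omega : ¬ n % 2 = 0)] at this
        simpa using this
      have hEven : ∀ m, s (m + D) + s (2*m + 2*D) = s m + s (2*m) := by
        intro m
        have := HA (2*m)
        simp only [qe] at this
        rw [if_pos (by omega : (2*m + 2*D) % 2 = 0), if_pos (by omega : (2*m) % 2 = 0),
          show (2*m + 2*D)/2 = m + D from by omega, show (2*m)/2 = m from by omega] at this
        exact this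
      have hlem := caseA_lem s D hOdd hEven
      have hC2 := corr_lower s N (4*D) 0 (N - 1 - 4*D) (by omega) (by omega) hlem
      have hcnt := count_mod4 0 (N - 1 - 4*D) (by omega)
      apply final_rat s N (2^ℓ) _ hC2
      apply numAB N (2^ℓ) _ _ (by omega) (by omega) (by omega)
      omega
  · -- Case B : a₁ = 1, a₀ = 0
    simp only [zero_mul, one_mul, add_zero] at Hper
    rcases Nat.eq_zero_or_pos ℓ with hl | hl
    · -- ℓ = 0
      subst hl
      simp only [pow_zero] at Hper hNT ⊢
      have Hconst : ∀ n, xqe s n + s n = s 0 := by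
        intro n
        have base : xqe s 0 + s 0 = s 0 := by simp [xqe]
        induction n with
        | zero => exact base
        | succ n ih => exact (Hper n).trans ih
      have hEv : ∀ m, s (2*m) = s 0 := by
        intro m
        have := Hconst (2*m)
        rw [xqe_even] at this
        simpa using this
      have hOd : ∀ m, s m + s (2*m+1) = s 0 := by
        intro m
        have := Hconst (2*m+1)
        rw [xqe_odd] at this
        exact this
      have hlem : ∀ n, n % 4 ≠ 3 → s (n + 4) = s n := by
        intro n hn
        by_cases h2 : n % 2 = 0
        · obtain ⟨m, rfl⟩ : ∃ m, n = 2*m := ⟨n/2, by omega⟩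
          rw [show 2*m+4 = 2*(m+2) from by ring, hEv, hEv]
        · obtain ⟨m, rfl⟩ : ∃ m, n = 4*m + 1 := ⟨n/4, by omega⟩
          have ha1 : s (4*m+1) = 0 := by
            have h := hOd (2*m)
            rw [show 2*(2*m)+1 = 4*m+1 from by ring] at h
            exact zmod2_cancel _ _ _ h (hEv m)
          have ha2 : s (4*m+1+4) = 0 := by
            have h := hOd (2*m+2)
            rw [show 2*(2*m+2)+1 = 4*m+1+4 from by ring] at h
            have h5 := hEv (m+1)
            rw [show 2*(m+1) = 2*m+2 from by ring] at h5
            exact zmod2_cancel _ _ _ h h5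
          rw [ha1, ha2]
      have hC2 := corr_lower s N 4 3 (N - 5) (by omega) (by omega) hlem
      have hcnt := count_mod4 3 (N - 5) (by omega)
      apply final_rat s N 1 _ hC2
      have hc4 : 4 * (((Finset.range (N-5)).filter (fun n => n % 4 = 3)).card : ℤ) + 5 ≤ (N:ℤ) := by
        exact_mod_cast (by omega : 4 * ((Finset.range (N-5)).filter (fun n => n % 4 = 3)).card + 5 ≤ N)
      have hsub : ((N-5:ℕ):ℤ) = (N:ℤ) - 5 := by
        push_cast [Nat.cast_sub (by omega : 5 ≤ N)]; ring
      rw [hsub]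
      push_cast
      linarith
    · -- ℓ ≥ 1
      obtain ⟨D, hTD, hD1⟩ : ∃ D, 2^ℓ = 2*D ∧ 1 ≤ D :=
        ⟨2^(ℓ-1), two_pow_split ℓ hl, Nat.one_le_two_pow⟩
      have HB : ∀ n, xqe s (n + 2*D) + s (n + 2*D) = xqe s n + s n := by
        intro n; have := Hper n; rw [hTD] at this; exact this
      have hEvenB : ∀ m, s (2*m + 2*D) = s (2*m) := by
        intro m
        have := HB (2*m)
        rw [show 2*m + 2*D = 2*(m+D) from by ring, xqe_even, xqe_even] at this
        have h2 : s (2*(m+D)) = s (2*m) := by simpa using this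
        rw [show 2*(m+D) = 2*m + 2*D from by ring] at h2
        exact h2
      have hOddB : ∀ m, s (m + D) + s (2*m + 1 + 2*D) = s m + s (2*m+1) := by
        intro m
        have := HB (2*m+1)
        rw [show 2*m + 1 + 2*D = 2*(m+D)+1 from by ring, xqe_odd, xqe_odd] at this
        rw [show 2*(m+D)+1 = 2*m+1+2*D from by ring] at this
        exact this
      have hlem := caseB_lem s D hEvenB hOddB
      have hC2 := corr_lower s N (4*D) 3 (N - 1 - 4*D) (by omega) (by omega) hlem
      have hcnt := count_mod4 3 (N - 1 - 4*D) (by omega)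
      apply final_rat s N (2^ℓ) _ hC2
      apply numAB N (2^ℓ) _ _ (by omega) (by omega) (by omega)
      omega
  · -- Case C : a₁ = 1, a₀ = 1
    simp only [one_mul] at Hper
    rcases Nat.eq_zero_or_pos ℓ with hl | hl
    · -- ℓ = 0
      subst hl
      simp only [pow_zero] at Hper hNT ⊢
      have Hconst : ∀ n, s (n/2) + s n = s 0 + s 0 := by
        intro n
        have key : ∀ m, xqe s m + qe s m + s m = xqe s 0 + qe s 0 + s 0 := by
          intro m
          induction m with
          | zero => rfl
          | succ m ih => exact (Hper m).trans ih
        have := key n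
        rw [xqe_add_qe, xqe_add_qe] at this
        simpa using this
      have hconst : ∀ n, s n = s 0 := by
        intro n
        induction n using Nat.strong_induction_on with
        | _ n ih =>
          rcases Nat.eq_zero_or_pos n with h | h
          · rw [h]
          · have h2 : s (n/2) = s n := by
              have := Hconst n
              have h0 : s 0 + s 0 = 0 := zmod2_add_self _
              rw [h0] at this
              exact zmod2_add_eq_zero this
            rw [← h2]
            exact ih (n/2) (by omega)
      have hconst2 : ∀ n, n < N - 2 → s (n + 0) + s (n + 1) = s 0 + s 0 := by
        intro n _
        rw [hconst (n+0), hconst (n+1)]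
      have habs := abs_const_sum s 0 1 (N-2) (s 0 + s 0) hconst2
      have hC2 : ((N - 2 : ℕ) : ℤ) ≤ C2 s N := by
        rw [← habs]
        exact le_C2 s N (N-2) 0 1 (by omega) (by omega)
      apply final_rat s N 1 _ hC2
      push_cast [Nat.cast_sub (by omega : 2 ≤ N)]
      linarith [(by exact_mod_cast hNT : (6:ℤ) ≤ (N:ℤ))]
    · -- ℓ ≥ 1
      obtain ⟨D, hTD, hD1⟩ : ∃ D, 2^ℓ = 2*D ∧ 1 ≤ D :=
        ⟨2^(ℓ-1), two_pow_split ℓ hl, Nat.one_le_two_pow⟩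
      have HC : ∀ n, xqe s (n + 2*D) + qe s (n + 2*D) + s (n + 2*D)
          = xqe s n + qe s n + s n := by
        intro n; have := Hper n; rw [hTD] at this; exact this
      have hC : ∀ n, s (n/2 + D) + s (n + 2*D) = s (n/2) + s n := by
        intro n
        have := HC n
        rw [xqe_add_qe, xqe_add_qe, show (n + 2*D)/2 = n/2 + D from by omega] at this
        exact this
      have key := caseC_lem s D hC
      have hx1 : 1 ≤ (N-1)/(2*D+2) := by
        rw [Nat.le_div_iff_mul_le (by omega)]
        omega
      set k := Nat.log 2 ((N-1)/(2*D+2)) with hk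
      have h1 : 2^k ≤ (N-1)/(2*D+2) := Nat.pow_log_le_self 2 (by omega)
      have h2 : (N-1)/(2*D+2) < 2^(k+1) := Nat.lt_pow_succ_log_self (by norm_num) _
      have hle : 2^k * (2*D+2) ≤ N - 1 := (Nat.le_div_iff_mul_le (by omega)).mp h1
      have hgt : N - 1 < 2^(k+1) * (2*D+2) := (Nat.div_lt_iff_lt_mul (by omega)).mp h2
      have hconst : ∀ n, n < 2^(k+1) → s (n + 0) + s (n + 2^(k+1)*D) = s D + s 0 := by
        intro n hn
        have := key k n
        rw [Nat.div_eq_of_lt hn, Nat.zero_add] at this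
        rw [add_comm]
        exact this
      have habs := abs_const_sum s 0 (2^(k+1)*D) (2^(k+1)) (s D + s 0) hconst
      have hC2 : ((2^(k+1) : ℕ) : ℤ) ≤ C2 s N := by
        rw [← habs]
        apply le_C2 s N (2^(k+1)) 0 (2^(k+1)*D) (by positivity)
        have harith : 2^(k+1)*D + 2^(k+1) = 2^k * (2*D+2) := by ring
        omega
      apply final_rat s N (2^ℓ) _ hC2
      have hNle : N ≤ 2^(k+1) * (2*D+2) := by omega
      have hcast2 : ((2^ℓ : ℕ) : ℤ) = 2*(D:ℤ) := by exact_mod_cast hTD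
      rw [hcast2]
      have hNle' : (N:ℤ) ≤ ((2^(k+1) : ℕ) : ℤ) * (2*(D:ℤ)+2) := by exact_mod_cast hNle
      have hD' : (1:ℤ) ≤ (D:ℤ) := by exact_mod_cast hD1
      nlinarith
end
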